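/- Let f : {0,1}^n → ℝ be an affine function f(x) = c + Σ_i c_i x_i. If Pr[f(x) ∉ {0,1}] < 1/4 (over a uniformly random x ∈ {0,1}^n), then f is one of the functions 0, 1, x_i, or 1 − x_i for some i ∈ [n]. In particular, each c_i ∈ {0, ±1} and at most one c_i is nonzero. -/

import Mathlib

open scoped Classical
open Finset

private def flp {n : ℕ} (i : Fin n) (x : Fin n → Bool) : Fin n → Bool :=
  Function.update x i (!x i)

private lemma flp_apply_self {n : ℕ} (i : Fin n) (x : Fin n → Bool) :
    flp i x i = !x i := Function.update_self _ _ _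

private lemma flp_apply_ne {n : ℕ} {i j : Fin n} (h : j ≠ i) (x : Fin n → Bool) :
    flp i x j = x j := Function.update_of_ne h _ _

private lemma flp_invol {n : ℕ} (i : Fin n) : Function.Involutive (flp i) := by
  intro x
  funext j
  by_cases h : j = i
  · subst h; simp [flp]
  · simp [flp, Function.update_of_ne h]

private lemma sum_flp {n : ℕ} (cc : Fin n → ℝ) (i : Fin n) (x : Fin n → Bool) :
    ∑ j, cc j * (if flp i x j then (1:ℝ) else 0)
      = (∑ j, cc j * (if x j then (1:ℝ) else 0)) + (if x i then -cc i else cc i) := by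
  have h1 : ∑ j, cc j * (if flp i x j then (1:ℝ) else 0)
      = cc i * (if !x i then (1:ℝ) else 0)
        + ∑ j ∈ univ.erase i, cc j * (if x j then (1:ℝ) else 0) := by
    rw [← Finset.add_sum_erase _ _ (mem_univ i), flp_apply_self]
    congr 1
    exact Finset.sum_congr rfl fun j hj => by rw [flp_apply_ne (mem_erase.mp hj).1]
  have h2 : ∑ j, cc j * (if x j then (1:ℝ) else 0)
      = cc i * (if x i then (1:ℝ) else 0)
        + ∑ j ∈ univ.erase i, cc j * (if x j then (1:ℝ) else 0) :=
    (Finset.add_sum_erase _ _ (mem_univ i)).symm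
  rw [h1, h2]
  cases hx : x i <;> simp <;> ring

private lemma card_filter_le' {α : Type*} [Fintype α] [DecidableEq α] (B : Finset α)
    (g : α → α) (hg : Function.Injective g) :
    (univ.filter fun x => g x ∈ B).card ≤ B.card :=
  Finset.card_le_card_of_injOn g (fun x hx => (mem_filter.mp hx).2) hg.injOn

private lemma exists4 {α : Type*} [Fintype α] [DecidableEq α] (B : Finset α)
    (g1 g2 g3 : α → α) (h1 : Function.Injective g1) (h2 : Function.Injective g2)
    (h3 : Function.Injective g3) (hB : 4 * B.card < Fintype.card α) :
    ∃ x, x ∉ B ∧ g1 x ∉ B ∧ g2 x ∉ B ∧ g3 x ∉ B := by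
  by_contra h
  push_neg at h
  have hsub : (univ : Finset α) ⊆
      B ∪ (univ.filter fun x => g1 x ∈ B) ∪ (univ.filter fun x => g2 x ∈ B)
        ∪ (univ.filter fun x => g3 x ∈ B) := by
    intro x _
    simp only [mem_union, mem_filter, mem_univ, true_and]
    by_cases hx0 : x ∈ B
    · tauto
    by_cases hx1 : g1 x ∈ B
    · tauto
    by_cases hx2 : g2 x ∈ B
    · tauto
    exact Or.inr (h x hx0 hx1 hx2)
  have hcards := Finset.card_le_card hsub
  rw [Finset.card_univ] at hcards
  have c1 := card_filter_le' B g1 h1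
  have c2 := card_filter_le' B g2 h2
  have c3 := card_filter_le' B g3 h3
  have hchain : ((B ∪ (univ.filter fun x => g1 x ∈ B) ∪ (univ.filter fun x => g2 x ∈ B)
        ∪ (univ.filter fun x => g3 x ∈ B)).card : ℕ)
      ≤ B.card + (univ.filter fun x => g1 x ∈ B).card
        + (univ.filter fun x => g2 x ∈ B).card + (univ.filter fun x => g3 x ∈ B).card :=
    calc _ ≤ (B ∪ (univ.filter fun x => g1 x ∈ B) ∪ (univ.filter fun x => g2 x ∈ B)).card
            + (univ.filter fun x => g3 x ∈ B).card := Finset.card_union_le _ _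
      _ ≤ (B ∪ (univ.filter fun x => g1 x ∈ B)).card + (univ.filter fun x => g2 x ∈ B).card
            + (univ.filter fun x => g3 x ∈ B).card :=
          Nat.add_le_add_right (Finset.card_union_le _ _) _
      _ ≤ _ := Nat.add_le_add_right (Nat.add_le_add_right (Finset.card_union_le _ _) _) _
  omega

theorem stmt0 (n : ℕ) (c : ℝ) (cc : Fin n → ℝ)
    (f : (Fin n → Bool) → ℝ)
    (hf : ∀ x, f x = c + ∑ i, cc i * (if x i then (1:ℝ) else 0))
    (hPr : ((Finset.univ.filter fun x : Fin n → Bool => f x ≠ 0 ∧ f x ≠ 1).card : ℝ) / 2 ^ n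
      < 1 / 4) :
    ((∀ x, f x = 0) ∨ (∀ x, f x = 1) ∨
      ∃ i, (∀ x, f x = if x i then (1:ℝ) else 0) ∨
           (∀ x, f x = 1 - if x i then (1:ℝ) else 0)) ∧
    (∀ i, cc i = 0 ∨ cc i = 1 ∨ cc i = -1) ∧
    (∀ i j, cc i ≠ 0 → cc j ≠ 0 → i = j) := by
  classical
  set Bad := (univ.filter fun x : Fin n → Bool => f x ≠ 0 ∧ f x ≠ 1) with hBadDef
  have hcard : 4 * Bad.card < 2 ^ n := by
    have h2 : (0:ℝ) < (2:ℝ) ^ n := by positivity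
    rw [div_lt_div_iff₀ h2 (by norm_num : (0:ℝ) < 4)] at hPr
    have h3 : ((4 * Bad.card : ℕ) : ℝ) < ((2 ^ n : ℕ) : ℝ) := by push_cast; linarith
    exact_mod_cast h3
  have hcardU : 4 * Bad.card < Fintype.card (Fin n → Bool) := by
    simpa using hcard
  have hgood : ∀ x, x ∉ Bad → f x = 0 ∨ f x = 1 := by
    intro x hx
    by_contra hc
    push_neg at hc
    exact hx (mem_filter.mpr ⟨mem_univ x, hc⟩)
  have hstep : ∀ (i : Fin n) (x : Fin n → Bool),
      f (flp i x) = f x + (if x i then -cc i else cc i) := by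
    intro i x; rw [hf, hf, sum_flp]; ring
  have hinj : ∀ i : Fin n, Function.Injective (flp i) := fun i => (flp_invol i).injective
  -- at most one nonzero coefficient
  have hone : ∀ i j, cc i ≠ 0 → cc j ≠ 0 → i = j := by
    intro i j hi hj
    by_contra hne
    obtain ⟨x, hx0, hx1, hx2, hx3⟩ := exists4 Bad (flp i) (flp j) (flp i ∘ flp j)
      (hinj i) (hinj j) ((hinj i).comp (hinj j)) hcardU
    have hA := hgood x hx0
    have hB := hgood _ hx1
    have hC := hgood _ hx2
    have hD := hgood _ hx3
    have e1 := hstep i x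
    have e2 := hstep j x
    have e3 : f (flp i (flp j x)) = f x + (if x j then -cc j else cc j)
        + (if x i then -cc i else cc i) := by
      rw [hstep i (flp j x), e2, flp_apply_ne hne]
    have hei : (if x i then -cc i else cc i) ≠ 0 := by cases x i <;> simpa using hi
    have hej : (if x j then -cc j else cc j) ≠ 0 := by cases x j <;> simpa using hj
    have hBA : f (flp i x) ≠ f x := by rw [e1]; intro h; apply hei; linarith
    have hCA : f (flp j x) ≠ f x := by rw [e2]; intro h; apply hej; linarith
    have hsum : f ((flp i ∘ flp j) x) = f (flp i x) + f (flp j x) - f x := by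
      simp only [Function.comp_apply]
      rw [e1, e2, e3]; ring
    rcases hA with h|h <;> rcases hB with h'|h' <;> rcases hC with h''|h'' <;>
      rcases hD with h'''|h''' <;> rw [h, h'] at hBA <;> rw [h, h''] at hCA <;>
      rw [h, h', h'', h'''] at hsum <;> first | (exact hBA rfl) | (exact hCA rfl) | norm_num at hsum
  -- coefficient values
  have hval : ∀ i, cc i = 0 ∨ cc i = 1 ∨ cc i = -1 := by
    intro i
    by_cases hi : cc i = 0
    · exact Or.inl hi
    right
    obtain ⟨x, hx0, hx1, -, -⟩ := exists4 Bad (flp i) (flp i) (flp i)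
      (hinj i) (hinj i) (hinj i) hcardU
    have hA := hgood x hx0
    have hB := hgood _ hx1
    have e1 := hstep i x
    have hcases : cc i = f (flp i x) - f x ∨ cc i = f x - f (flp i x) := by
      cases hxi : x i <;> rw [hxi] at e1
      · left; simp at e1; linarith
      · right; simp at e1; linarith
    rcases hcases with h|h <;> rcases hA with h'|h' <;> rcases hB with h''|h'' <;>
      rw [h', h''] at h <;> norm_num at h <;> tauto
  refine ⟨?_, hval, hone⟩
  by_cases hex : ∃ i, cc i ≠ 0
  · obtain ⟨i, hi⟩ := hex
    have hzero : ∀ j, j ≠ i → cc j = 0 := by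
      intro j hj
      by_contra hcj
      exact hj (hone j i hcj hi)
    have hform : ∀ x, f x = c + cc i * (if x i then (1:ℝ) else 0) := by
      intro x
      rw [hf]
      congr 1
      rw [Finset.sum_eq_single i]
      · intro b _ hb; rw [hzero b hb]; ring
      · intro h; exact absurd (mem_univ i) h
    obtain ⟨x, hx0, hx1, -, -⟩ := exists4 Bad (flp i) (flp i) (flp i)
      (hinj i) (hinj i) (hinj i) hcardU
    have hA := hgood x hx0
    have hB := hgood _ hx1
    rw [hform] at hA
    rw [hform, flp_apply_self] at hB
    have hc01 : (c = 0 ∨ c = 1) ∧ (c + cc i = 0 ∨ c + cc i = 1) := by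
      cases hxi : x i <;> rw [hxi] at hA hB <;> simp at hA hB <;> constructor <;> tauto
    obtain ⟨hc, hcci⟩ := hc01
    right; right
    refine ⟨i, ?_⟩
    rcases hc with hc|hc
    · left
      have h1 : cc i = 1 := by
        rcases hcci with h|h
        · exact absurd (by linarith) hi
        · linarith
      intro x'
      rw [hform, hc, h1]
      cases x' i <;> simp
    · right
      have h1 : cc i = -1 := by
        rcases hcci with h|h
        · linarith
        · exact absurd (by linarith) hi
      intro x'
      rw [hform, hc, h1]
      cases x' i <;> simp
  · push_neg at hex
    have hform : ∀ x, f x = c := by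
      intro x; rw [hf]; simp [hex]
    have hgx : ∃ x, x ∉ Bad := by
      by_contra h
      push_neg at h
      have : Bad = univ := Finset.eq_univ_of_forall h
      rw [this, Finset.card_univ] at hcardU
      omega
    obtain ⟨x, hx⟩ := hgx
    have := hgood x hx
    rw [hform] at this
    rcases this with h|h
    · left; intro y; rw [hform, h]
    · right; left; intro y; rw [hform, h]
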